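/- (Skolem hull argument) Let L be a first-order language, M an L-structure, and P ⊆ M a set of parameters. Suppose there is a binary relation R on M that well-orders M (R is a strict well-order on all of M) and that R is definable over M by an L-formula with parameters from P. Let Def^M(P) be the set of all elements a ∈ M that are definable over M with parameters from P, i.e., such that for some L-formula φ(x, y₁, …, y_k) and parameters b₁, …, b_k ∈ P, a is the unique element of M satisfying φ(x, b̄) in M. Then Def^M(P) is closed under the interpretations of all function symbols of L, and the induced substructure on Def^M(P) is an elementary substructure of M. -/

import Mathlib

open FirstOrder FirstOrder.Language

/-- `definableClosure L P` is the set of elements of `M` definable over `M` by an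
`L`-formula with parameters from `P`: those `a` such that for some formula
`φ(x, y₁, …, yₙ)` and parameters `b₁, …, bₙ ∈ P`, `a` is the unique element of `M`
satisfying `φ(x, b̄)`. -/
def definableClosure (L : Language) {M : Type*} [L.Structure M] (P : Set M) : Set M :=
  {a : M | ∃ (n : ℕ) (φ : L.Formula (Fin (n + 1))) (b : Fin n → M),
    (∀ i, b i ∈ P) ∧ ∀ x : M, φ.Realize (Fin.cons x b) ↔ x = a}

section Aux

variable {L : Language} {M : Type*} [L.Structure M] {P : Set M}

lemma SkolemAux.mem_of_mem {p : M} (hp : p ∈ P) : p ∈ definableClosure L P := by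
  refine ⟨1, Term.equal (Term.var 0) (Term.var 1), ![p],
    fun i => by fin_cases i; exact hp, fun x => ?_⟩
  simp [Formula.realize_equal]

lemma SkolemAux.merge (m : ℕ) (c : Fin m → M) (hc : ∀ i, c i ∈ definableClosure L P) :
    ∃ (n : ℕ) (ρ : L.Formula (Fin m ⊕ Fin n)) (b : Fin n → M),
      (∀ i, b i ∈ P) ∧ ∀ w : Fin m → M, ρ.Realize (Sum.elim w b) ↔ w = c := by
  induction m with
  | zero =>
    exact ⟨0, ⊤, Fin.elim0, fun i => i.elim0,
      fun w => by simp [Subsingleton.elim w c]⟩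
  | succ m ih =>
    obtain ⟨n, ρ, b, hb, hρ⟩ := ih (c ∘ Fin.succ) (fun i => hc i.succ)
    obtain ⟨n', φ, b', hb', hφ⟩ := hc 0
    refine ⟨n + n',
      (φ.relabel (Fin.cases (Sum.inl 0) (fun j => Sum.inr (Fin.natAdd n j)))) ⊓
        (ρ.relabel (Sum.map Fin.succ (Fin.castAdd n'))),
      Fin.append b b',
      fun i => Fin.addCases (fun j => by simpa using hb j) (fun j => by simpa using hb' j) i, fun w => ?_⟩
    have h1 : (Sum.elim w (Fin.append b b')) ∘
        (Fin.cases (Sum.inl 0) (fun j => Sum.inr (Fin.natAdd n j)) :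
          Fin (n' + 1) → Fin (m + 1) ⊕ Fin (n + n')) = Fin.cons (w 0) b' := by
      funext i
      refine Fin.cases ?_ (fun j => ?_) i <;> simp [Fin.append_right]
    have h2 : (Sum.elim w (Fin.append b b')) ∘ (Sum.map Fin.succ (Fin.castAdd n')) =
        Sum.elim (w ∘ Fin.succ) b := by
      funext i
      rcases i with i | i <;> simp [Fin.append_left]
    rw [Formula.realize_inf, Formula.realize_relabel, Formula.realize_relabel, h1, h2, hφ, hρ]
    constructor
    · rintro ⟨h0, hs⟩
      funext i
      refine Fin.cases h0 (fun j => congrFun hs j) i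
    · rintro rfl
      exact ⟨rfl, rfl⟩

lemma SkolemAux.defOfDef {m : ℕ} (θ : L.Formula (Fin (m + 1))) (c : Fin m → M)
    (hc : ∀ i, c i ∈ definableClosure L P) (a : M)
    (h : ∀ x, θ.Realize (Fin.cons x c) ↔ x = a) : a ∈ definableClosure L P := by
  obtain ⟨n, ρ, b, hb, hρ⟩ := SkolemAux.merge m c hc
  refine ⟨n, Formula.iExs (Fin m)
    ((θ.relabel (Fin.cases (Sum.inl 0) Sum.inr)) ⊓
      (ρ.relabel (Sum.elim Sum.inr (fun j => Sum.inl j.succ)))), b, hb, fun x => ?_⟩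
  rw [Formula.realize_iExs]
  constructor
  · rintro ⟨w, hw⟩
    rw [Formula.realize_inf, Formula.realize_relabel, Formula.realize_relabel] at hw
    obtain ⟨h1, h2⟩ := hw
    have e1 : ((fun a => Sum.elim (Fin.cons x b) w a) ∘
        (Fin.cases (Sum.inl 0) Sum.inr : Fin (m+1) → Fin (n+1) ⊕ Fin m)) = Fin.cons x w := by
      funext i
      refine Fin.cases ?_ (fun j => ?_) i <;> simp
    have e2 : ((fun a => Sum.elim (Fin.cons x b) w a) ∘
        (Sum.elim Sum.inr (fun j => Sum.inl j.succ) : Fin m ⊕ Fin n → Fin (n+1) ⊕ Fin m)) =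
        Sum.elim w b := by
      funext i
      rcases i with i | i <;> simp
    rw [e1] at h1
    rw [e2, hρ] at h2
    subst h2
    exact (h x).1 h1
  · intro hx
    refine ⟨c, ?_⟩
    rw [Formula.realize_inf, Formula.realize_relabel, Formula.realize_relabel]
    have e1 : ((fun a => Sum.elim (Fin.cons x b) c a) ∘
        (Fin.cases (Sum.inl 0) Sum.inr : Fin (m+1) → Fin (n+1) ⊕ Fin m)) = Fin.cons x c := by
      funext i
      refine Fin.cases ?_ (fun j => ?_) i <;> simp
    have e2 : ((fun a => Sum.elim (Fin.cons x b) c a) ∘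
        (Sum.elim Sum.inr (fun j => Sum.inl j.succ) : Fin m ⊕ Fin n → Fin (n+1) ⊕ Fin m)) =
        Sum.elim c b := by
      funext i
      rcases i with i | i <;> simp
    rw [e1, e2, hρ, h]
    exact ⟨hx, rfl⟩


lemma SkolemAux.least {R : M → M → Prop} (hwo : IsWellOrder M R)
    (hRdef : ∃ (n : ℕ) (ψ : L.Formula (Fin n ⊕ Fin 2)) (b : Fin n → M),
      (∀ i, b i ∈ P) ∧ ∀ x y : M, ψ.Realize (Sum.elim b ![x, y]) ↔ R x y)
    {m : ℕ} (θ : L.Formula (Fin (m + 1))) (c : Fin m → M)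
    (hc : ∀ i, c i ∈ definableClosure L P)
    (hex : ∃ x, θ.Realize (Fin.cons x c)) :
    ∃ a ∈ definableClosure L P, θ.Realize (Fin.cons a c) := by
  obtain ⟨n, ψ, b, hb, hψ⟩ := hRdef
  haveI := hwo
  have wf : WellFounded R := IsWellFounded.wf
  set S : Set M := {x | θ.Realize (Fin.cons x c)} with hSdef
  have hS : S.Nonempty := hex
  set a := wf.min S hS with ha
  have haS : a ∈ S := wf.min_mem S hS
  have hmin : ∀ y ∈ S, ¬ R y a := fun y hy => wf.not_lt_min S hy
  set θ' : L.Formula (Fin (m + n + 1)) :=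
    (θ.relabel (Fin.cases 0 (fun j => (Fin.castAdd n j).succ))) ⊓
      (Formula.iAlls (Fin 1)
        ((θ.relabel (Fin.cases (Sum.inr 0)
            (fun j => Sum.inl (Fin.castAdd n j).succ) :
            Fin (m + 1) → Fin (m + n + 1) ⊕ Fin 1)).imp
          (ψ.relabel (Sum.elim (fun k => Sum.inl (Fin.natAdd m k).succ)
            ![Sum.inr 0, Sum.inl 0] :
            Fin n ⊕ Fin 2 → Fin (m + n + 1) ⊕ Fin 1)).not)) with hθ'
  refine ⟨a, SkolemAux.defOfDef θ' (Fin.append c b)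
    (fun i => Fin.addCases (fun j => by simpa using hc j)
      (fun j => by simpa using SkolemAux.mem_of_mem (hb j)) i) a (fun x => ?_), haS⟩
  have key : θ'.Realize (Fin.cons x (Fin.append c b)) ↔
      (x ∈ S ∧ ∀ y ∈ S, ¬ R y x) := by
    rw [hθ', Formula.realize_inf, Formula.realize_relabel, Formula.realize_iAlls]
    have e3 : (Fin.cons x (Fin.append c b)) ∘
        (Fin.cases 0 (fun j => (Fin.castAdd n j).succ) :
          Fin (m + 1) → Fin (m + n + 1)) = Fin.cons x c := by
      funext i
      refine Fin.cases ?_ (fun j => ?_) i <;> simp [Fin.append_left]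
    rw [e3]
    refine and_congr Iff.rfl ?_
    constructor
    · intro hall y hy
      have := hall (fun _ => y)
      rw [Formula.realize_imp, Formula.realize_relabel, Formula.realize_not,
        Formula.realize_relabel] at this
      have e4 : ((fun a => Sum.elim (Fin.cons x (Fin.append c b)) (fun _ => y) a) ∘
          (Fin.cases (Sum.inr 0) (fun j => Sum.inl (Fin.castAdd n j).succ) :
            Fin (m + 1) → Fin (m + n + 1) ⊕ Fin 1)) = Fin.cons y c := by
        funext i
        refine Fin.cases ?_ (fun j => ?_) i <;> simp [Fin.append_left]
      have e5 : ((fun a => Sum.elim (Fin.cons x (Fin.append c b)) (fun _ => y) a) ∘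
          (Sum.elim (fun k => Sum.inl (Fin.natAdd m k).succ)
            ![Sum.inr 0, Sum.inl 0] : Fin n ⊕ Fin 2 → Fin (m + n + 1) ⊕ Fin 1)) =
          Sum.elim b ![y, x] := by
        funext i
        rcases i with i | i
        · simp [Fin.append_right]
        · fin_cases i <;> simp
      rw [e4, e5, hψ] at this
      exact this hy
    · intro hall i
      rw [Formula.realize_imp, Formula.realize_relabel, Formula.realize_not,
        Formula.realize_relabel]
      have e4 : ((fun a => Sum.elim (Fin.cons x (Fin.append c b)) i a) ∘
          (Fin.cases (Sum.inr 0) (fun j => Sum.inl (Fin.castAdd n j).succ) :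
            Fin (m + 1) → Fin (m + n + 1) ⊕ Fin 1)) = Fin.cons (i 0) c := by
        funext j
        refine Fin.cases ?_ (fun j => ?_) j <;> simp [Fin.append_left]
      have e5 : ((fun a => Sum.elim (Fin.cons x (Fin.append c b)) i a) ∘
          (Sum.elim (fun k => Sum.inl (Fin.natAdd m k).succ)
            ![Sum.inr 0, Sum.inl 0] : Fin n ⊕ Fin 2 → Fin (m + n + 1) ⊕ Fin 1)) =
          Sum.elim b ![i 0, x] := by
        funext j
        rcases j with j | j
        · simp [Fin.append_right]
        · fin_cases j <;> simp
      rw [e4, e5, hψ]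
      exact hall (i 0)
  rw [key]
  constructor
  · rintro ⟨hxS, hx⟩
    rcases trichotomous_of R x a with h | h | h
    · exact absurd h (hmin x hxS)
    · exact h
    · exact absurd h (hx a haS)
  · rintro rfl
    exact ⟨haS, hmin⟩

end Aux

/-- (Skolem hull argument) If a strict well-order `R` of all of `M` is definable over
`M` with parameters from `P`, then the set `Def^M(P)` of elements definable with
parameters from `P` is closed under all function symbols of `L`, and carries an
elementary substructure of `M`. -/
theorem definableClosure_elementarySubstructure
    {L : Language} {M : Type*} [L.Structure M] (P : Set M)
    (R : M → M → Prop) (hwo : IsWellOrder M R)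
    (hRdef : ∃ (n : ℕ) (ψ : L.Formula (Fin n ⊕ Fin 2)) (b : Fin n → M),
      (∀ i, b i ∈ P) ∧ ∀ x y : M, ψ.Realize (Sum.elim b ![x, y]) ↔ R x y) :
    (∀ (k : ℕ) (f : L.Functions k) (v : Fin k → M),
        (∀ i, v i ∈ definableClosure L P) →
        Structure.funMap f v ∈ definableClosure L P) ∧
    ∃ N : L.ElementarySubstructure M,
      ((N : L.Substructure M) : Set M) = definableClosure L P := by
  have funClosed : ∀ (k : ℕ) (f : L.Functions k) (v : Fin k → M),
      (∀ i, v i ∈ definableClosure L P) →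
      Structure.funMap f v ∈ definableClosure L P := by
    intro k f v hv
    refine SkolemAux.defOfDef
      (Term.equal (Term.var 0) (Term.func f (fun i => Term.var i.succ))) v hv _ (fun x => ?_)
    simp [Formula.realize_equal, Term.realize]
  refine ⟨funClosed, ?_⟩
  let S : L.Substructure M :=
    { carrier := definableClosure L P
      fun_mem := fun {k} f v hv => funClosed k f v hv }
  have htv : ∀ (k : ℕ) (φ : L.BoundedFormula Empty (k + 1)) (x : Fin k → S) (a : M),
      φ.Realize default (Fin.snoc ((↑) ∘ x) a : _ → M) →
      ∃ b : S, φ.Realize default (Fin.snoc ((↑) ∘ x) b : _ → M) := by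
    intro k φ x a ha
    set w : Fin k → M := (↑) ∘ x with hw
    set θ : L.Formula (Fin (k + 1)) :=
      (φ.toFormula).relabel (Sum.elim (fun e => e.elim) (fun i => i + 1)) with hθ
    have key : ∀ y : M, θ.Realize (Fin.cons y w) ↔
        φ.Realize default (Fin.snoc w y : _ → M) := by
      intro y
      rw [hθ, Formula.realize_relabel, BoundedFormula.realize_toFormula]
      have e1 : (((Fin.cons y w) ∘ (Sum.elim (fun e => e.elim) (fun i => i + 1) :
          Empty ⊕ Fin (k + 1) → Fin (k + 1))) ∘ Sum.inl) = (default : Empty → M) :=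
        Subsingleton.elim _ _
      have e2 : (((Fin.cons y w) ∘ (Sum.elim (fun e => e.elim) (fun i => i + 1) :
          Empty ⊕ Fin (k + 1) → Fin (k + 1))) ∘ Sum.inr) = Fin.snoc w y := by
        funext i
        refine Fin.lastCases ?_ (fun j => ?_) i
        · simp [Fin.last_add_one]
        · simp [Fin.coeSucc_eq_succ]
      rw [e1, e2]
    obtain ⟨b, hbmem, hbθ⟩ := SkolemAux.least hwo hRdef θ w (fun i => (x i).2)
      ⟨a, (key a).2 ha⟩
    exact ⟨⟨b, hbmem⟩, (key b).1 hbθ⟩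
  exact ⟨⟨S, S.isElementary_of_exists htv⟩, rfl⟩
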